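/- Let F be a field of characteristic zero and let H be a nonzero element of a differential field extension of F(t, x₁,…,x_m) with δ_t(H) = a·H for some a ∈ F(t, x₁,…,x_m). If there exist p ∈ F(x₁,…,x_m)[t] nonzero and r ∈ F(t) such that a = δ_t(p)/p + r, then H is annihilated by a nonzero linear differential operator in D_t with coefficients in F(t). -/
import Mathlib


open Polynomial

/-- The derivative `d/dt` on `K(t)` (with constants `K`), by the quotient rule on the
reduced representation. -/
noncomputable def ratDeriv {K : Type*} [Field K] (f : RatFunc K) : RatFunc K :=
  (algebraMap K[X] (RatFunc K) (derivative f.num) * algebraMap K[X] (RatFunc K) f.denom -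
      algebraMap K[X] (RatFunc K) f.num * algebraMap K[X] (RatFunc K) (derivative f.denom)) /
    algebraMap K[X] (RatFunc K) (f.denom ^ 2)

/-- The natural embedding `F(t) → K(t)` induced by `F ⊆ K`. -/
noncomputable def liftRF {F K : Type*} [Field F] [Field K] [Algebra F K] :
    RatFunc F →+* RatFunc K :=
  RatFunc.mapRingHom (Polynomial.mapRingHom (algebraMap F K)) (by
    intro q hq
    simp only [Submonoid.mem_comap, Polynomial.coe_mapRingHom]
    exact mem_nonZeroDivisors_of_ne_zero
      ((Polynomial.map_ne_zero_iff (algebraMap F K).injective).mpr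
        (nonZeroDivisors.ne_zero hq)))

section Aux

variable {K : Type*} [Field K]

lemma ratDeriv_algebraMap (q : K[X]) :
    ratDeriv (algebraMap K[X] (RatFunc K) q) = algebraMap K[X] (RatFunc K) (derivative q) := by
  unfold ratDeriv
  rw [RatFunc.num_algebraMap, RatFunc.denom_algebraMap]
  simp

lemma poly_quot_id {R : Type*} [CommRing R] (N D u v N' D' u' v' : R)
    (h1 : N * v = u * D) (h2 : N' * v + N * v' = u' * D + u * D') :
    (N' * D - N * D') * v ^ 2 = (u' * v - u * v') * D ^ 2 := by
  linear_combination (D * v) * h2 - (v' * D + v * D') * h1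

lemma ratDeriv_div (u v : K[X]) (hv : v ≠ 0) :
    ratDeriv (algebraMap K[X] (RatFunc K) u / algebraMap K[X] (RatFunc K) v) =
      algebraMap K[X] (RatFunc K) (derivative u * v - u * derivative v) /
        algebraMap K[X] (RatFunc K) (v ^ 2) := by
  set f := algebraMap K[X] (RatFunc K) u / algebraMap K[X] (RatFunc K) v with hf
  have hD : f.denom ≠ 0 := f.denom_ne_zero
  have hinj : Function.Injective (algebraMap K[X] (RatFunc K)) := IsFractionRing.injective _ _
  have hv' : algebraMap K[X] (RatFunc K) v ≠ 0 := (map_ne_zero_iff _ hinj).mpr hv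
  have hD' : algebraMap K[X] (RatFunc K) f.denom ≠ 0 := (map_ne_zero_iff _ hinj).mpr hD
  have hcross : f.num * v = u * f.denom := by
    apply hinj
    have h1 : algebraMap K[X] (RatFunc K) f.num / algebraMap K[X] (RatFunc K) f.denom =
        algebraMap K[X] (RatFunc K) u / algebraMap K[X] (RatFunc K) v := by
      rw [RatFunc.num_div_denom]
    rw [div_eq_div_iff hD' hv'] at h1
    rw [map_mul, map_mul]
    exact h1
  have hcross' : derivative f.num * v + f.num * derivative v =
      derivative u * f.denom + u * derivative f.denom := by
    have := congrArg derivative hcross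
    simpa [derivative_mul] using this
  clear hf
  clear_value f
  unfold ratDeriv
  rw [← map_mul, ← map_mul, ← map_sub,
    div_eq_div_iff ((map_ne_zero_iff _ hinj).mpr (pow_ne_zero _ hD))
      ((map_ne_zero_iff _ hinj).mpr (pow_ne_zero _ hv)), ← map_mul, ← map_mul]
  exact congrArg _ (poly_quot_id _ _ _ _ _ _ _ _ hcross hcross')

variable {F : Type*} [Field F] {Kk : Type*} [Field Kk] [Algebra F Kk]

lemma liftRF_algebraMap (q : F[X]) :
    liftRF (K := Kk) (algebraMap F[X] (RatFunc F) q) =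
      algebraMap Kk[X] (RatFunc Kk) (q.map (algebraMap F Kk)) := by
  have h0 : algebraMap F[X] (RatFunc F) q =
      algebraMap F[X] (RatFunc F) q / algebraMap F[X] (RatFunc F) 1 := by simp
  rw [h0]
  show RatFunc.mapRingHom _ _ _ = _
  rw [show (RatFunc.mapRingHom (Polynomial.mapRingHom (algebraMap F Kk)) _ :
      RatFunc F → RatFunc Kk) = RatFunc.map _ _ from RatFunc.coe_mapRingHom_eq_coe_map _ _]
  rw [RatFunc.map_apply_div]
  simp

lemma ratDeriv_liftRF (e : RatFunc F) :
    ratDeriv (liftRF (K := Kk) e) = liftRF (ratDeriv e) := by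
  have hden : e.denom ≠ 0 := e.denom_ne_zero
  have hden' : e.denom.map (algebraMap F Kk) ≠ 0 :=
    (Polynomial.map_ne_zero_iff (algebraMap F Kk).injective).mpr hden
  have he : e = algebraMap F[X] (RatFunc F) e.num / algebraMap F[X] (RatFunc F) e.denom :=
    (RatFunc.num_div_denom e).symm
  have hlift : liftRF (K := Kk) e =
      algebraMap Kk[X] (RatFunc Kk) (e.num.map (algebraMap F Kk)) /
        algebraMap Kk[X] (RatFunc Kk) (e.denom.map (algebraMap F Kk)) := by
    conv_lhs => rw [he]
    rw [map_div₀, liftRF_algebraMap, liftRF_algebraMap]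
  have hrd : ratDeriv e = algebraMap F[X] (RatFunc F)
      (derivative e.num * e.denom - e.num * derivative e.denom) /
        algebraMap F[X] (RatFunc F) (e.denom ^ 2) := by
    conv_lhs => rw [he]
    exact ratDeriv_div _ _ hden
  rw [hlift, ratDeriv_div _ _ hden', hrd, map_div₀, liftRF_algebraMap, liftRF_algebraMap]
  simp only [Polynomial.derivative_map, Polynomial.map_sub, Polynomial.map_mul,
    Polynomial.map_pow]

end Aux

set_option maxHeartbeats 1000000 in
theorem hyperexp_aux {F : Type*} [Field F] {K : Type*} [Field K] [Algebra F K]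
    {L : Type*} [Field L]
    (ι : RatFunc K →+* L)
    (δ : L → L) (hδadd : ∀ u v : L, δ (u + v) = δ u + δ v)
    (hδmul : ∀ u v : L, δ (u * v) = δ u * v + u * δ v)
    (hδι : ∀ w, δ (ι w) = ι (ratDeriv w))
    (H : L)
    (a : RatFunc K)
    (hHa : δ H = ι a * H)
    (p : Polynomial K) (hp : p ≠ 0)
    (r : RatFunc F)
    (ha : a = ratDeriv (algebraMap _ _ p) / algebraMap _ _ p + liftRF r) :
    ∃ (ρ : ℕ) (ℓ : ℕ → RatFunc F), ℓ ρ ≠ 0 ∧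
      ∑ j ∈ Finset.range (ρ + 1), ι (liftRF (ℓ j)) * δ^[j] H = 0 := by
  classical
  have hιinj : Function.Injective ι := ι.injective
  have hainj : Function.Injective (algebraMap (Polynomial K) (RatFunc K)) :=
    IsFractionRing.injective _ _
  letI : Algebra (RatFunc F) L := (ι.comp liftRF).toAlgebra
  have hsmul : ∀ (e : RatFunc F) (x : L), e • x = ι (liftRF e) * x := fun e x => rfl
  have hδ0 : δ 0 = 0 := by
    have h := hδadd 0 0
    rw [add_zero] at h
    have h2 : δ 0 + 0 = δ 0 + δ 0 := by rw [add_zero]; exact h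
    exact (add_left_cancel h2).symm
  obtain ⟨pA, hpAdef⟩ : ∃ pA, pA = algebraMap (Polynomial K) (RatFunc K) p := ⟨_, rfl⟩
  have hpA0 : pA ≠ 0 := by
    rw [hpAdef]
    intro h
    exact hp (hainj (by rw [h, map_zero]))
  obtain ⟨P, hPdef⟩ : ∃ P : L, P = ι pA := ⟨_, rfl⟩
  have hP0 : P ≠ 0 := by
    rw [hPdef]
    intro h
    exact hpA0 (hιinj (by rw [h, map_zero]))
  obtain ⟨G, hGdef⟩ : ∃ G : L, G = P⁻¹ * H := ⟨_, rfl⟩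
  have hHPG : H = P * G := by rw [hGdef, ← mul_assoc, mul_inv_cancel₀ hP0, one_mul]
  have hδP : δ P = ι (algebraMap _ _ (derivative p)) := by
    rw [hPdef, hδι, hpAdef, ratDeriv_algebraMap]
  have haP : a * pA = algebraMap _ _ (derivative p) + liftRF r * pA := by
    have h0 : algebraMap (Polynomial K) (RatFunc K) p ≠ 0 := fun h =>
      hp (hainj (by rw [h, map_zero]))
    rw [ha, hpAdef, ratDeriv_algebraMap]
    field_simp
  have hδG : δ G = ι (liftRF r) * G := by
    have h1 : δ H = δ P * G + P * δ G := by
      conv_lhs => rw [hHPG]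
      exact hδmul P G
    rw [hHa, hδP] at h1
    have h3 : ι a * (P * G) = ι (algebraMap _ _ (derivative p)) * G + P * δ G := by
      rw [← hHPG]; exact h1
    have h4 : ι a * P = ι (algebraMap _ _ (derivative p)) + ι (liftRF r) * P := by
      rw [hPdef, ← map_mul, ← map_mul, ← map_add]
      exact congrArg ι haP
    have h2 : P * δ G = P * (ι (liftRF r) * G) := by linear_combination G * h4 - h3
    exact mul_left_cancel₀ hP0 h2
  -- generators
  obtain ⟨n, hn⟩ : ∃ n, n = p.natDegree := ⟨_, rfl⟩
  obtain ⟨u, hu⟩ : ∃ u : ℕ × ℕ → L, u = fun ij =>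
      ι (algebraMap _ _ (Polynomial.C (p.coeff ij.1) * Polynomial.X ^ ij.2)) * G := ⟨_, rfl⟩
  obtain ⟨T, hT⟩ : ∃ T : Finset L,
      T = ((Finset.range (n+1)) ×ˢ (Finset.range (n+1))).image u := ⟨_, rfl⟩
  obtain ⟨W, hW⟩ : ∃ W : Submodule (RatFunc F) L,
      W = Submodule.span (RatFunc F) (T : Set L) := ⟨_, rfl⟩
  have humem : ∀ i j, i ≤ n → j ≤ n → u (i, j) ∈ W := by
    intro i j hi hj
    rw [hW]
    exact Submodule.subset_span (by
      rw [hT]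
      exact Finset.mem_coe.mpr (Finset.mem_image_of_mem u (Finset.mem_product.mpr
        ⟨Finset.mem_range.mpr (Nat.lt_succ_of_le hi),
         Finset.mem_range.mpr (Nat.lt_succ_of_le hj)⟩)))
  have hHW : H ∈ W := by
    have hps : pA = ∑ i ∈ Finset.range (n+1),
        algebraMap (Polynomial K) (RatFunc K) (Polynomial.C (p.coeff i) * Polynomial.X ^ i) := by
      rw [hpAdef]
      conv_lhs => rw [p.as_sum_range_C_mul_X_pow, ← hn]
      rw [map_sum]
    have hsum : H = ∑ i ∈ Finset.range (n+1), u (i, i) := by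
      rw [hHPG, hPdef, hps, map_sum, Finset.sum_mul, hu]
    rw [hsum]
    exact Submodule.sum_mem _ fun i hi =>
      humem i i (Nat.lt_succ_iff.mp (Finset.mem_range.mp hi))
        (Nat.lt_succ_iff.mp (Finset.mem_range.mp hi))
  have hδu : ∀ i j, δ (u (i, j)) = (j : RatFunc F) • u (i, j - 1) + r • u (i, j) := by
    intro i j
    rw [hsmul, hsmul, hu]
    simp only []
    rw [hδmul, hδι, ratDeriv_algebraMap, hδG, derivative_C_mul_X_pow]
    rw [show (Polynomial.C (p.coeff i * (j : K)) * Polynomial.X ^ (j-1) : Polynomial K)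
        = (j : Polynomial K) * (Polynomial.C (p.coeff i) * Polynomial.X ^ (j-1)) from by
      rw [map_mul, Polynomial.C_eq_natCast]; ring]
    rw [map_mul, map_mul, map_natCast, map_natCast, map_natCast, map_natCast]
    ring
  have hWstable : ∀ x ∈ W, δ x ∈ W := by
    rw [hW]
    intro x hx
    induction hx using Submodule.span_induction with
    | mem x hxT =>
        rw [hT] at hxT
        obtain ⟨ij, hij, rfl⟩ := Finset.mem_image.mp (Finset.mem_coe.mp hxT)
        obtain ⟨i, j⟩ := ij
        obtain ⟨hi, hj⟩ := Finset.mem_product.mp hij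
        rw [hδu i j, ← hW]
        exact W.add_mem
          (W.smul_mem _ (humem i (j-1) (Nat.lt_succ_iff.mp (Finset.mem_range.mp hi))
            (le_trans (Nat.sub_le j 1) (Nat.lt_succ_iff.mp (Finset.mem_range.mp hj)))))
          (W.smul_mem _ (humem i j (Nat.lt_succ_iff.mp (Finset.mem_range.mp hi))
            (Nat.lt_succ_iff.mp (Finset.mem_range.mp hj))))
    | zero => rw [hδ0]; exact Submodule.zero_mem _
    | add x y hx hy ihx ihy => rw [hδadd]; exact Submodule.add_mem _ ihx ihy
    | smul e x hx ihx =>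
        have heq : δ (e • x) = (ratDeriv e) • x + e • δ x := by
          rw [hsmul, hsmul, hsmul, hδmul, hδι, ratDeriv_liftRF]
        rw [heq]
        exact Submodule.add_mem _ (Submodule.smul_mem _ _ hx) (Submodule.smul_mem _ _ ihx)
  have hiter : ∀ k, δ^[k] H ∈ W := by
    intro k
    induction k with
    | zero => simpa using hHW
    | succ k ih => rw [Function.iterate_succ_apply']; exact hW ▸ hWstable _ (hW ▸ ih)
  obtain ⟨N, hN⟩ : ∃ N, N = T.card := ⟨_, rfl⟩
  haveI : FiniteDimensional (RatFunc F) W := by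
    rw [hW]; exact FiniteDimensional.span_finset _ T
  have hdep : ¬ LinearIndependent (RatFunc F)
      (fun k : Fin (N+1) => (⟨δ^[(k:ℕ)] H, hiter k⟩ : W)) := by
    intro hli
    have hcard := hli.fintype_card_le_finrank
    have hrk : Module.finrank (RatFunc F) W ≤ N := by
      rw [hW, hN]; exact finrank_span_finset_le_card T
    rw [Fintype.card_fin] at hcard
    omega
  obtain ⟨g, hgsum, i0, hi0⟩ := Fintype.not_linearIndependent_iff.mp hdep
  have hgsum' : ∑ i : Fin (N+1), g i • δ^[(i:ℕ)] H = 0 := by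
    have hc := congrArg (Subtype.val) hgsum
    push_cast at hc
    simpa using hc
  obtain ⟨S, hS⟩ : ∃ S : Finset (Fin (N+1)),
      S = Finset.univ.filter (fun i : Fin (N+1) => g i ≠ 0) := ⟨_, rfl⟩
  have hSne : S.Nonempty :=
    ⟨i0, by rw [hS]; exact Finset.mem_filter.mpr ⟨Finset.mem_univ _, hi0⟩⟩
  obtain ⟨ρf, hρf⟩ : ∃ ρf, ρf = S.max' hSne := ⟨_, rfl⟩
  have hρS : ρf ∈ S := hρf ▸ S.max'_mem hSne
  have hρmax : ∀ i ∈ S, i ≤ ρf := fun i hi => hρf ▸ S.le_max' i hi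
  obtain ⟨ℓ, hℓ⟩ : ∃ ℓ : ℕ → RatFunc F,
      ℓ = fun j => if h : j < N+1 then g ⟨j, h⟩ else 0 := ⟨_, rfl⟩
  refine ⟨(ρf : ℕ), ℓ, ?_, ?_⟩
  · have hρS' := hρS
    rw [hS] at hρS'
    rw [hℓ]
    simp only [dif_pos ρf.isLt, Fin.eta]
    exact (Finset.mem_filter.mp hρS').2
  · have hext : ∑ j ∈ Finset.range ((ρf : ℕ)+1), ι (liftRF (ℓ j)) * δ^[j] H
        = ∑ j ∈ Finset.range (N+1), ι (liftRF (ℓ j)) * δ^[j] H := by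
      apply Finset.sum_subset
      · exact Finset.range_subset_range.mpr (Nat.succ_le_of_lt ρf.isLt)
      · intro j hj hnj
        have hjN : j < N+1 := Finset.mem_range.mp hj
        have hjρ : ¬ j < (ρf : ℕ)+1 := fun h => hnj (Finset.mem_range.mpr h)
        have hg0 : g ⟨j, hjN⟩ = 0 := by
          by_contra hg0
          have hmem : (⟨j, hjN⟩ : Fin (N+1)) ∈ S := by
            rw [hS]; exact Finset.mem_filter.mpr ⟨Finset.mem_univ _, hg0⟩
          have hle := hρmax _ hmem
          exact hjρ (Nat.lt_succ_of_le hle)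
        rw [hℓ]
        simp only [dif_pos hjN, hg0, map_zero, zero_mul]
    rw [hext, ← Fin.sum_univ_eq_sum_range (fun j => ι (liftRF (ℓ j)) * δ^[j] H) (N+1)]
    rw [← hgsum']
    apply Finset.sum_congr rfl
    intro i _
    rw [hsmul, hℓ]
    simp only [dif_pos i.isLt, Fin.eta]


/-- Hyperexponential case. Let `K = F(x₁, …, x_m)` and let `L` be a differential field
extension of `F(t, x₁, …, x_m) = K(t)` via `ι`, with derivation `δ` extending `∂/∂t`.
Let `H ∈ L` be nonzero and hyperexponential: `δ(H) = a·H` with `a ∈ K(t)`. If there are a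
nonzero `p ∈ F(x₁,…,x_m)[t] = K[t]` and `r ∈ F(t)` with `a = δ_t(p)/p + r`, then `H` is
annihilated by a nonzero operator `Σ ℓ_j D_t^j` with `ℓ_j ∈ F(t)`. -/
theorem hyperexponential_Dt_separable {F : Type*} [Field F] [CharZero F] (m : ℕ)
    {L : Type*} [Field L]
    (ι : RatFunc (FractionRing (MvPolynomial (Fin m) F)) →+* L)
    (δ : L → L) (hδadd : ∀ u v : L, δ (u + v) = δ u + δ v)
    (hδmul : ∀ u v : L, δ (u * v) = δ u * v + u * δ v)
    (hδι : ∀ w, δ (ι w) = ι (ratDeriv w))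
    (H : L) (hH : H ≠ 0)
    (a : RatFunc (FractionRing (MvPolynomial (Fin m) F)))
    (hHa : δ H = ι a * H)
    (p : Polynomial (FractionRing (MvPolynomial (Fin m) F))) (hp : p ≠ 0)
    (r : RatFunc F)
    (ha : a = ratDeriv (algebraMap _ _ p) / algebraMap _ _ p + liftRF r) :
    ∃ (ρ : ℕ) (ℓ : ℕ → RatFunc F), ℓ ρ ≠ 0 ∧
      ∑ j ∈ Finset.range (ρ + 1), ι (liftRF (ℓ j)) * δ^[j] H = 0 :=
  hyperexp_aux ι δ hδadd hδmul hδι H a hHa p hp r ha
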